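/- If two probability weighting functions satisfy w₁ ≤ w₂ pointwise on [0,1] and agree at 0 and 1, and X is a nonnegative random variable with values sorted in increasing order x₀ ≤ ⋯ ≤ xₙ, then the CPT value with weighting w₂ is at least the CPT value with weighting w₁ for any non-decreasing nonnegative utility u (weighting-monotonicity of the rank-dependent functional via Abel summation). -/

import Mathlib

open Finset

lemma abel_aux (g v : ℕ → ℝ) (n : ℕ) :
    ∑ i ∈ Finset.range (n + 1), (g i - g (i + 1)) * v i
      = g 0 * v 0 - g (n + 1) * v n
        + ∑ i ∈ Finset.range n, g (i + 1) * (v (i + 1) - v i) := by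
  induction n with
  | zero => simp; ring
  | succ n ih =>
      rw [Finset.sum_range_succ, ih, Finset.sum_range_succ]
      ring

/-- Weighting-monotonicity of the rank-dependent (CPT) functional: if two
probability weighting functions satisfy `w₁ ≤ w₂` pointwise on `[0,1]` and
agree at `0` and `1`, and the values are sorted nonnegatively increasing, then
for any non-decreasing nonnegative utility `u`, the CPT value with weighting
`w₂` is at least the CPT value with weighting `w₁`. -/
theorem cpt_monotone_in_weighting (n : ℕ) (x p : ℕ → ℝ)
    (hx : ∀ i ≤ n, 0 ≤ x i)
    (hsorted : ∀ i j, i ≤ j → j ≤ n → x i ≤ x j)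
    (hp : ∀ i ≤ n, 0 ≤ p i)
    (hpsum : ∑ i ∈ Finset.range (n + 1), p i = 1)
    (u : ℝ → ℝ) (hu : MonotoneOn u (Set.Ici (0 : ℝ)))
    (hu0 : ∀ y : ℝ, 0 ≤ y → 0 ≤ u y)
    (w₁ w₂ : ℝ → ℝ)
    (hw₁ : MonotoneOn w₁ (Set.Icc (0 : ℝ) 1))
    (hw₂ : MonotoneOn w₂ (Set.Icc (0 : ℝ) 1))
    (hw₁0 : w₁ 0 = 0) (hw₂0 : w₂ 0 = 0) (hw₁1 : w₁ 1 = 1) (hw₂1 : w₂ 1 = 1)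
    (hle : ∀ q ∈ Set.Icc (0 : ℝ) 1, w₁ q ≤ w₂ q) :
    ∑ i ∈ Finset.range (n + 1),
        (w₁ (∑ j ∈ Finset.Icc i n, p j) -
          w₁ (∑ j ∈ Finset.Icc (i + 1) n, p j)) * u (x i) ≤
      ∑ i ∈ Finset.range (n + 1),
        (w₂ (∑ j ∈ Finset.Icc i n, p j) -
          w₂ (∑ j ∈ Finset.Icc (i + 1) n, p j)) * u (x i) := by
  set S : ℕ → ℝ := fun i => ∑ j ∈ Finset.Icc i n, p j with hS
  have hS0 : S 0 = 1 := by
    have : Finset.Icc 0 n = Finset.range (n + 1) := by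
      ext j; simp [Nat.lt_succ_iff]
    simp only [hS, this]; exact hpsum
  have hStop : S (n + 1) = 0 := by
    simp [hS, Finset.Icc_eq_empty_of_lt (Nat.lt_succ_self n)]
  have hSnonneg : ∀ i, 0 ≤ S i := by
    intro i
    exact Finset.sum_nonneg fun j hj => hp j (Finset.mem_Icc.mp hj).2
  have hSle1 : ∀ i, S i ≤ 1 := by
    intro i
    rw [← hS0]
    exact Finset.sum_le_sum_of_subset_of_nonneg
      (Finset.Icc_subset_Icc (Nat.zero_le i) le_rfl)
      (fun j hj _ => hp j (Finset.mem_Icc.mp hj).2)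
  have hSmem : ∀ i, S i ∈ Set.Icc (0 : ℝ) 1 := fun i => ⟨hSnonneg i, hSle1 i⟩
  rw [abel_aux (fun i => w₁ (S i)) (fun i => u (x i)) n,
      abel_aux (fun i => w₂ (S i)) (fun i => u (x i)) n]
  simp only [hS0, hStop, hw₁0, hw₂0, hw₁1, hw₂1]
  gcongr with i hi
  · have hi' : i + 1 ≤ n := Nat.succ_le_of_lt (Finset.mem_range.mp hi)
    have hu' : u (x i) ≤ u (x (i + 1)) :=
      hu (hx i (le_of_lt (Nat.lt_of_succ_le hi'))) (hx (i + 1) hi')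
        (hsorted i (i + 1) (Nat.le_succ i) hi')
    linarith
  · exact hle _ (hSmem (i + 1))
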